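/- arXiv:1812.04094 — 2 statements merged into one kernel-verified Lean document; each statement's English description precedes it below -/
import Mathlib

section
/- For every integer d ≥ 2: Rat_d^s ∩ I(d) = ∅ if and only if d = 2 or d = 3. -/
open MvPolynomial Filter Topology
open scoped Classical

noncomputable section

/-- Binary forms: polynomials in `X 0, X 1` over `ℂ`. A pair of homogeneous elements of
degree `d`, not both zero, represents a point of `ℙ^{2d+1}`. -/
abbrev MP : Type := MvPolynomial (Fin 2) ℂ

noncomputable instance : NormalizationMonoid MP :=
  UniqueFactorizationMonoid.strongNormalizationMonoid.toNormalizationMonoid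

noncomputable instance : NormalizedGCDMonoid MP :=
  UniqueFactorizationMonoid.toNormalizedGCDMonoid MP

/-- The complex projective line `ℙ¹(ℂ)`. -/
abbrev P1 : Type := Projectivization ℂ (Fin 2 → ℂ)

/-- A linear form vanishing exactly at the projective point `z`. -/
noncomputable def linForm (z : P1) : MP :=
  C (z.rep 1) * X 0 - C (z.rep 0) * X 1

/-- Multiplicity of `z` as a zero of the binary form `H`. -/
noncomputable def rootMult (H : MP) (z : P1) : ℕ :=
  sSup {k : ℕ | linForm z ^ k ∣ H}

/-- `H_f = gcd(P, Q)` for `f = [P : Q]`. -/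
noncomputable def Hgcd (f : MP × MP) : MP := gcd f.1 f.2

/-- The depth `d_z(f)` of `z` as a hole of `f`: multiplicity of `z` as a zero of `H_f`. -/
noncomputable def depthP (f : MP × MP) (z : P1) : ℕ := rootMult (Hgcd f) z

/-- `z` is a hole of `f`, i.e. a zero of `H_f`. -/
def IsHole (f : MP × MP) (z : P1) : Prop := linForm z ∣ Hgcd f

/-- The induced map `f̂ = [P / H_f : Q / H_f]` as a pair of binary forms. -/
noncomputable def fhat (f : MP × MP) : MP × MP :=
  ((dvd_def.mp (gcd_dvd_left f.1 f.2)).choose,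
   (dvd_def.mp (gcd_dvd_right f.1 f.2)).choose)

/-- A pair of binary forms acting as a self-map of `ℙ¹` (junk value `z` where undefined). -/
noncomputable def apply₁ (g : MP × MP) (z : P1) : P1 :=
  if h : (![eval z.rep g.1, eval z.rep g.2] : Fin 2 → ℂ) ≠ 0 then
    Projectivization.mk ℂ _ h
  else z

/-- The induced map `f̂` as a self-map of `ℙ¹`. -/
noncomputable def fhatFun (f : MP × MP) : P1 → P1 := apply₁ (fhat f)

/-- The induced map of `f` is constant. -/
def ConstHat (f : MP × MP) : Prop := ∃ c : P1, ∀ z : P1, fhatFun f z = c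

/-- Local multiplicity `m_z(g)` of the rational map `[g.1 : g.2]` at `z`
(equal to `0` when the map is constant). -/
noncomputable def multAt (g : MP × MP) (z : P1) : ℕ :=
  rootMult (C (eval z.rep g.2) * g.1 - C (eval z.rep g.1) * g.2) z

/-- Local multiplicity `m_z(f̂)` of the induced map of `f` at `z`. -/
noncomputable def hatMult (f : MP × MP) (z : P1) : ℕ := multAt (fhat f) z

/-- Composition of pairs of binary forms (homogeneous representatives). -/
noncomputable def comp2 (f g : MP × MP) : MP × MP :=
  (aeval ![g.1, g.2] f.1, aeval ![g.1, g.2] f.2)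

/-- The iterate `f^n` as a pair of binary forms (canonical homogeneous representative). -/
noncomputable def iterPair (f : MP × MP) : ℕ → MP × MP
  | 0 => (X 0, X 1)
  | n + 1 => comp2 f (iterPair f n)

/-- GIT semistability of a degree-`d` point `f` of `ℙ^{2d+1}`. -/
def Semistable (d : ℕ) (f : MP × MP) : Prop :=
  (∀ z : P1, (depthP f z : ℚ) ≤ ((d : ℚ) + 1) / 2) ∧
  ∀ h : P1, (d : ℚ) / 2 ≤ (depthP f h : ℚ) → fhatFun f h ≠ h

/-- GIT stability of a degree-`d` point `f` of `ℙ^{2d+1}`. -/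
def Stable (d : ℕ) (f : MP × MP) : Prop :=
  (∀ z : P1, (depthP f z : ℚ) ≤ (d : ℚ) / 2) ∧
  ∀ h : P1, ((d : ℚ) - 1) / 2 ≤ (depthP f h : ℚ) → fhatFun f h ≠ h

/-- The indeterminacy locus `I(d)`: the induced map is a constant `c` which is a hole. -/
def Idet (f : MP × MP) : Prop :=
  ∃ c : P1, (∀ z : P1, fhatFun f z = c) ∧ IsHole f c

/-- The set `U_n` of `n`-unstable maps. -/
def Unstable (d n : ℕ) (f : MP × MP) : Prop :=
  Semistable d f ∧ ¬ Idet f ∧ ¬ Semistable (d ^ n) (iterPair f n)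

/-- `f` is a representative of a point of `ℙ^{2d+1}`: a pair of homogeneous binary
forms of degree `d`, not both zero. -/
def IsRatRep (d : ℕ) (f : MP × MP) : Prop :=
  f.1.IsHomogeneous d ∧ f.2.IsHomogeneous d ∧ f ≠ 0

/-- Projective equality of pairs of binary forms. -/
def ProjEq (f g : MP × MP) : Prop := ∃ c : ℂ, c ≠ 0 ∧ g = (C c * f.1, C c * f.2)

/-- The point `∞ = [1 : 0]` of `ℙ¹`. -/
noncomputable def infty : P1 :=
  Projectivization.mk ℂ ![1, 0] (by
    intro h
    simpa using congrFun h 0)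

/-- The point `[a : 1]` of `ℙ¹`. -/
noncomputable def ptc (a : ℂ) : P1 :=
  Projectivization.mk ℂ ![a, 1] (by
    intro h
    simpa using congrFun h 1)

/-- The degree of a pair of binary forms. -/
def pairDeg (g : MP × MP) : ℕ := max g.1.totalDegree g.2.totalDegree

end

section proofs
open MvPolynomial

private lemma primeX0 : Prime (X 0 : MP) := by
  rw [← MulEquiv.prime_iff (MvPolynomial.finSuccEquiv ℂ 1).toMulEquiv]
  have h : (MvPolynomial.finSuccEquiv ℂ 1).toMulEquiv (X 0 : MP)
      = (Polynomial.X : Polynomial (MvPolynomial (Fin 1) ℂ)) :=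
    MvPolynomial.finSuccEquiv_X_zero
  rw [h]
  exact Polynomial.prime_X

private lemma prime_lin (t s c e : ℂ) (h : t * e + s * c = 1) :
    Prime (C t * X 0 - C s * X 1 : MP) := by
  have hC : (C t : MP) * C e + C s * C c = 1 := by
    rw [← C_mul, ← C_mul, ← C_add, h, C_1]
  let φ : MP →ₐ[ℂ] MP := aeval ![C t * X 0 - C s * X 1, C c * X 0 + C e * X 1]
  let ψ : MP →ₐ[ℂ] MP := aeval ![C e * X 0 + C s * X 1, -(C c) * X 0 + C t * X 1]
  have h1 : φ.comp ψ = AlgHom.id ℂ MP := by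
    apply MvPolynomial.algHom_ext
    intro i
    fin_cases i
    · show φ (ψ (X 0)) = X 0
      simp only [φ, ψ, aeval_X, map_add, map_mul, map_sub, map_neg, aeval_C,
        MvPolynomial.algebraMap_eq, Matrix.cons_val_zero, Matrix.cons_val_one, Matrix.head_cons]
      linear_combination (X (0 : Fin 2) : MP) * hC
    · show φ (ψ (X 1)) = X 1
      simp only [φ, ψ, aeval_X, map_add, map_mul, map_sub, map_neg, aeval_C,
        MvPolynomial.algebraMap_eq, Matrix.cons_val_zero, Matrix.cons_val_one, Matrix.head_cons]
      linear_combination (X (1 : Fin 2) : MP) * hC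
  have h2 : ψ.comp φ = AlgHom.id ℂ MP := by
    apply MvPolynomial.algHom_ext
    intro i
    fin_cases i
    · show ψ (φ (X 0)) = X 0
      simp only [φ, ψ, aeval_X, map_add, map_mul, map_sub, map_neg, aeval_C,
        MvPolynomial.algebraMap_eq, Matrix.cons_val_zero, Matrix.cons_val_one, Matrix.head_cons]
      linear_combination (X (0 : Fin 2) : MP) * hC
    · show ψ (φ (X 1)) = X 1
      simp only [φ, ψ, aeval_X, map_add, map_mul, map_sub, map_neg, aeval_C,
        MvPolynomial.algebraMap_eq, Matrix.cons_val_zero, Matrix.cons_val_one, Matrix.head_cons]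
      linear_combination (X (1 : Fin 2) : MP) * hC
  let E : MP ≃ₐ[ℂ] MP := AlgEquiv.ofAlgHom φ ψ h1 h2
  have hE : E.toMulEquiv (X 0 : MP) = C t * X 0 - C s * X 1 := by
    show φ (X 0) = _
    simp [φ, aeval_X]
  have := (MulEquiv.prime_iff E.toMulEquiv (p := (X 0 : MP))).mpr primeX0
  rwa [hE] at this

private lemma primeX1 : Prime (X 1 : MP) := by
  have := prime_lin 0 (-1) (-1) 0 (by ring)
  simpa using this

private lemma primeL3 : Prime (X 0 + X 1 : MP) := by
  have := prime_lin 1 (-1) 0 1 (by ring)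
  simpa using this

private lemma prime_linForm (z : P1) : Prime (linForm z) := by
  rw [linForm]
  by_cases ht : z.rep 1 = 0
  · have hs : z.rep 0 ≠ 0 := by
      intro hs
      apply z.rep_nonzero
      funext i
      fin_cases i <;> simp [hs, ht]
    exact prime_lin _ _ ((z.rep 0)⁻¹) 0
      (by rw [ht, mul_zero, zero_add, mul_inv_cancel₀ hs])
  · exact prime_lin _ _ 0 ((z.rep 1)⁻¹)
      (by rw [mul_inv_cancel₀ ht, mul_zero, add_zero])

private lemma not_dvd_eval {p q : MP} (v : Fin 2 → ℂ) (hp : eval v p = 0)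
    (hq : eval v q ≠ 0) : ¬ p ∣ q := by
  rintro ⟨m, rfl⟩
  exact hq (by rw [map_mul, hp, zero_mul])

private lemma X0_nd_X1 : ¬ (X 0 : MP) ∣ X 1 := not_dvd_eval ![0, 1] (by simp) (by simp)
private lemma X0_nd_L3 : ¬ (X 0 : MP) ∣ (X 0 + X 1) := not_dvd_eval ![0, 1] (by simp) (by simp)
private lemma X1_nd_X0 : ¬ (X 1 : MP) ∣ X 0 := not_dvd_eval ![1, 0] (by simp) (by simp)
private lemma X1_nd_L3 : ¬ (X 1 : MP) ∣ (X 0 + X 1) := not_dvd_eval ![1, 0] (by simp) (by simp)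
private lemma L3_nd_X0 : ¬ (X 0 + X 1 : MP) ∣ X 0 := not_dvd_eval ![1, -1] (by simp) (by simp)
private lemma L3_nd_X1 : ¬ (X 0 + X 1 : MP) ∣ X 1 := not_dvd_eval ![1, -1] (by simp) (by simp)

private lemma rootMult_le {H : MP} {z : P1} {n : ℕ}
    (h : ∀ k, linForm z ^ k ∣ H → k ≤ n) : rootMult H z ≤ n :=
  csSup_le ⟨0, by simp⟩ h

private lemma le_rootMult {H : MP} {z : P1} {k : ℕ} (hH : H ≠ 0)
    (h : linForm z ^ k ∣ H) : k ≤ rootMult H z := by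
  obtain ⟨n, hn⟩ := FiniteMultiplicity.of_not_isUnit (prime_linForm z).not_isUnit hH
  refine le_csSup ⟨n, fun m hm => ?_⟩ h
  by_contra hmn
  push_neg at hmn
  exact hn ((pow_dvd_pow _ (by omega)).trans hm)

private lemma small_case {d : ℕ} (hd3 : d ≤ 3) {f : MP × MP} (hrep : IsRatRep d f) :
    ¬ (Stable d f ∧ Idet f) := by
  rintro ⟨⟨_, hs2⟩, c, hc, hhole⟩
  have hG : Hgcd f ≠ 0 := by
    intro h0
    have h1 := (gcd_eq_zero_iff f.1 f.2).mp h0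
    exact hrep.2.2 (Prod.ext h1.1 h1.2)
  have h1 : 1 ≤ rootMult (Hgcd f) c := le_rootMult hG (by simpa [IsHole] using hhole)
  have hq : ((d : ℚ) - 1) / 2 ≤ (depthP f c : ℚ) := by
    have h1' : (1 : ℚ) ≤ (depthP f c : ℚ) := by exact_mod_cast h1
    have h3 : (d : ℚ) ≤ 3 := by exact_mod_cast hd3
    linarith
  exact hs2 c hq (hc c)

private lemma big_case {d : ℕ} (hd4 : 4 ≤ d) :
    ∃ f : MP × MP, IsRatRep d f ∧ Stable d f ∧ Idet f := by
  set e : ℕ := (d - 1) / 2 with he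
  set b : ℕ := d - 1 - e with hb
  have harith : e ≤ b ∧ 1 ≤ b ∧ 2 * b ≤ d ∧ 1 + (b + e) = d := by omega
  set M : MP := X 1 ^ b * (X 0 + X 1) ^ e with hM
  set H : MP := X 0 * M with hH
  have hX0ne : (X 0 : MP) ≠ 0 := primeX0.ne_zero
  have hX1ne : (X 1 : MP) ≠ 0 := primeX1.ne_zero
  have hL3ne : (X 0 + X 1 : MP) ≠ 0 := primeL3.ne_zero
  have hMne : M ≠ 0 := mul_ne_zero (pow_ne_zero _ hX1ne) (pow_ne_zero _ hL3ne)
  have hHne : H ≠ 0 := mul_ne_zero hX0ne hMne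
  have hNne : normalize H ≠ 0 := fun h0 => hHne (normalize_eq_zero.mp h0)
  -- key divisibility bounds
  have key0 : ∀ p : MP, Prime p → p ∣ X 0 → ∀ k, p ^ k ∣ H → k ≤ 1 := by
    intro p hp hpd k hk
    by_contra hk1
    push_neg at hk1
    have hassoc := hp.associated_of_dvd primeX0 hpd
    have h2 : (X 0 : MP) ^ 2 ∣ H :=
      ((hassoc.pow_pow (n := 2)).symm.dvd).trans ((pow_dvd_pow p (by omega)).trans hk)
    rw [hH, pow_two] at h2
    have h3 : (X 0 : MP) ∣ M := (mul_dvd_mul_iff_left hX0ne).mp h2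
    rw [hM] at h3
    rcases primeX0.dvd_mul.mp h3 with h4 | h4
    · exact X0_nd_X1 (primeX0.dvd_of_dvd_pow h4)
    · exact X0_nd_L3 (primeX0.dvd_of_dvd_pow h4)
  have key1 : ∀ p : MP, Prime p → p ∣ X 1 → ∀ k, p ^ k ∣ H → k ≤ b := by
    intro p hp hpd k hk
    by_contra hk1
    push_neg at hk1
    have hassoc := hp.associated_of_dvd primeX1 hpd
    have h2 : (X 1 : MP) ^ (b + 1) ∣ H :=
      ((hassoc.pow_pow (n := b + 1)).symm.dvd).trans ((pow_dvd_pow p (by omega)).trans hk)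
    have hH' : H = X 1 ^ b * (X 0 * (X 0 + X 1) ^ e) := by rw [hH, hM]; ring
    rw [hH', pow_succ] at h2
    have h3 : (X 1 : MP) ∣ X 0 * (X 0 + X 1) ^ e :=
      (mul_dvd_mul_iff_left (pow_ne_zero b hX1ne)).mp h2
    rcases primeX1.dvd_mul.mp h3 with h4 | h4
    · exact X1_nd_X0 h4
    · exact X1_nd_L3 (primeX1.dvd_of_dvd_pow h4)
  have key3 : ∀ p : MP, Prime p → p ∣ (X 0 + X 1) → ∀ k, p ^ k ∣ H → k ≤ e := by
    intro p hp hpd k hk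
    by_contra hk1
    push_neg at hk1
    have hassoc := hp.associated_of_dvd primeL3 hpd
    have h2 : (X 0 + X 1 : MP) ^ (e + 1) ∣ H :=
      ((hassoc.pow_pow (n := e + 1)).symm.dvd).trans ((pow_dvd_pow p (by omega)).trans hk)
    have hH' : H = (X 0 + X 1) ^ e * (X 0 * X 1 ^ b) := by rw [hH, hM]; ring
    rw [hH', pow_succ] at h2
    have h3 : (X 0 + X 1 : MP) ∣ X 0 * X 1 ^ b :=
      (mul_dvd_mul_iff_left (pow_ne_zero e hL3ne)).mp h2
    rcases primeL3.dvd_mul.mp h3 with h4 | h4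
    · exact L3_nd_X0 h4
    · exact L3_nd_X1 (primeL3.dvd_of_dvd_pow h4)
  have keyb : ∀ (z : P1) (k : ℕ), linForm z ^ k ∣ H → k ≤ b := by
    intro z k hk
    rcases Nat.eq_zero_or_pos k with rfl | hk0
    · exact Nat.zero_le _
    have hp := prime_linForm z
    have hpH : linForm z ∣ H := (dvd_pow_self _ hk0.ne').trans hk
    rw [hH] at hpH
    rcases hp.dvd_mul.mp hpH with h4 | h4
    · have := key0 _ hp h4 k hk; omega
    · rw [hM] at h4
      rcases hp.dvd_mul.mp h4 with h5 | h5
      · exact key1 _ hp (hp.dvd_of_dvd_pow h5) k hk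
      · have := key3 _ hp (hp.dvd_of_dvd_pow h5) k hk; omega
  -- the pair f and the constant point c
  set f : MP × MP := ((0 : MP), H) with hf
  have hf1 : f.1 = 0 := by rw [hf]
  have hf2 : f.2 = H := by rw [hf]
  have hHg : Hgcd f = normalize H := gcd_zero_left H
  have hc01 : (![0, 1] : Fin 2 → ℂ) ≠ 0 := by
    intro h0
    simpa using congrFun h0 1
  set c : P1 := Projectivization.mk ℂ ![0, 1] hc01 with hcdef
  obtain ⟨a, ha⟩ := (Projectivization.mk_eq_mk_iff ℂ _ _ (Projectivization.rep_nonzero c)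
    hc01).mp (Projectivization.mk_rep c)
  have hc0 : c.rep 0 = 0 := by rw [← ha]; simp [Units.smul_def]
  have hc1 : c.rep 1 = (a : ℂ) := by rw [← ha]; simp [Units.smul_def]
  have hlinc : linForm c = C (a : ℂ) * X 0 := by
    rw [linForm, hc0, hc1, map_zero, zero_mul, sub_zero]
  -- depth bounds
  have hdep : ∀ z : P1, depthP f z ≤ b := by
    intro z
    show rootMult (Hgcd f) z ≤ b
    rw [hHg]
    exact rootMult_le fun k hk => keyb z k (dvd_normalize_iff.mp hk)
  have hdepc : depthP f c ≤ 1 := by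
    show rootMult (Hgcd f) c ≤ 1
    rw [hHg]
    refine rootMult_le fun k hk => ?_
    refine key0 (linForm c) (prime_linForm c) ?_ k (dvd_normalize_iff.mp hk)
    rw [hlinc]
    exact ⟨C ((a⁻¹ : ℂˣ) : ℂ), by
      rw [mul_right_comm, ← C_mul, Units.mul_inv, C_1, one_mul]⟩
  -- fhat computations
  have spec1 : f.1 = Hgcd f * (fhat f).1 := (dvd_def.mp (gcd_dvd_left f.1 f.2)).choose_spec
  have spec2 : f.2 = Hgcd f * (fhat f).2 := (dvd_def.mp (gcd_dvd_right f.1 f.2)).choose_spec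
  have hA : (fhat f).1 = 0 := by
    have h0 : Hgcd f * (fhat f).1 = 0 := by rw [← spec1, hf1]
    refine (mul_eq_zero.mp h0).resolve_left ?_
    rw [hHg]
    exact hNne
  have hBunit : IsUnit (fhat f).2 := by
    have h2 : H = H * (↑(normUnit H) * (fhat f).2) := by
      have h2' : H = normalize H * (fhat f).2 := by rw [← hHg, ← hf2]; exact spec2
      rwa [normalize_apply, mul_assoc] at h2'
    have h3 : H * (↑(normUnit H) * (fhat f).2) = H * 1 := by rw [mul_one]; exact h2.symm
    have h4 := mul_left_cancel₀ hHne h3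
    exact IsUnit.of_mul_eq_one _ (by rw [mul_comm]; exact h4)
  have hconst : ∀ z : P1, fhatFun f z = c := by
    intro z
    have hu : eval z.rep (fhat f).2 ≠ 0 := (hBunit.map (eval z.rep)).ne_zero
    have hv : (![eval z.rep (fhat f).1, eval z.rep (fhat f).2] : Fin 2 → ℂ) ≠ 0 := by
      intro h0
      exact hu (by simpa using congrFun h0 1)
    show apply₁ (fhat f) z = c
    rw [apply₁, dif_pos hv, hcdef, Projectivization.mk_eq_mk_iff]
    refine ⟨Units.mk0 _ hu, ?_⟩
    funext i
    fin_cases i <;> simp [hA]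
  have hhole : IsHole f c := by
    show linForm c ∣ Hgcd f
    rw [hHg, dvd_normalize_iff, hlinc, hH]
    exact ⟨C ((a⁻¹ : ℂˣ) : ℂ) * M, by
      rw [mul_mul_mul_comm, ← C_mul, Units.mul_inv, C_1, one_mul]⟩
  -- homogeneity
  have hHhom : H.IsHomogeneous d := by
    have h1 := (isHomogeneous_X ℂ (0 : Fin 2)).mul
      (((isHomogeneous_X ℂ (1 : Fin 2)).pow b).mul
        (((isHomogeneous_X ℂ (0 : Fin 2)).add (isHomogeneous_X ℂ (1 : Fin 2))).pow e))
    have hdeg : 1 + (1 * b + 1 * e) = d := by omega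
    rw [hH, hM]
    exact hdeg ▸ h1
  refine ⟨f, ⟨?_, ?_, ?_⟩, ⟨?_, ?_⟩, ⟨c, hconst, hhole⟩⟩
  · exact hf1 ▸ isHomogeneous_zero (σ := Fin 2) (R := ℂ) d
  · exact hf2 ▸ hHhom
  · intro h0
    exact hHne (hf2.symm.trans (congrArg Prod.snd h0))
  · intro z
    have hq : (depthP f z : ℚ) ≤ (b : ℚ) := by exact_mod_cast hdep z
    have h2b : (2 * b : ℚ) ≤ (d : ℚ) := by exact_mod_cast harith.2.2.1
    linarith
  · intro h hdh
    rw [hconst h]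
    intro hch
    rw [← hch] at hdh
    have h1 : (depthP f c : ℚ) ≤ 1 := by exact_mod_cast hdepc
    have h4 : (4 : ℚ) ≤ (d : ℚ) := by exact_mod_cast hd4
    linarith

end proofs

/-- `Rat_d^s ∩ I(d) = ∅` if and only if `d = 2` or `d = 3`. -/
theorem statement8 (d : ℕ) (hd : 2 ≤ d) :
    (∀ f : MP × MP, IsRatRep d f → ¬ (Stable d f ∧ Idet f)) ↔ d = 2 ∨ d = 3 := by
  constructor
  · intro hall
    by_contra hne
    push_neg at hne
    obtain ⟨f, hrep, hsi⟩ := big_case (d := d) (by omega)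
    exact hall f hrep hsi
  · rintro (rfl | rfl) f hrep hsi <;> exact small_case (by norm_num) hrep hsi
end

section
/- Let d ≥ 3 be odd, and define F = [X^{(d+1)/2} Y^{(d−1)/2} : 0] ∈ ℙ^{2d+1} and G = [X^{(d+1)/2} Y^{(d−1)/2} : X^{(d−3)/2} Y^{(d+3)/2}] ∈ ℙ^{2d+1} (i.e., F([X:Y]) = X^{(d+1)/2}Y^{(d−1)/2}[1:0] and G([X:Y]) = X^{(d−3)/2}Y^{(d−1)/2}[X²:Y²]). Then: (i) both F and G are semistable but not stable; (ii) for M_t([X:Y]) = [tX:Y], the conjugate M_t ∘ G ∘ M_t^{−1} = [X^{(d+1)/2}Y^{(d−1)/2} : t·X^{(d−3)/2}Y^{(d+3)/2}] converges to F in ℙ^{2d+1} as t → 0. -/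
open MvPolynomial Filter Topology
open scoped Classical

section Lemmas

open MvPolynomial

namespace S11

noncomputable section

lemma evalP (v : Fin 2 → ℂ) (p q : MP) : eval v (p * q) = eval v p * eval v q := by simp

lemma primeX0 : Prime (X 0 : MP) := by
  rw [← MulEquiv.prime_iff (finSuccEquiv ℂ 1).toMulEquiv]
  have : (finSuccEquiv ℂ 1).toMulEquiv (X 0 : MP) = Polynomial.X := finSuccEquiv_X_zero
  rw [this]
  exact Polynomial.prime_X

lemma primeX1 : Prime (X 1 : MP) := by
  rw [← MulEquiv.prime_iff (renameEquiv ℂ (Equiv.swap (0 : Fin 2) 1)).toMulEquiv]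
  have : (renameEquiv ℂ (Equiv.swap (0 : Fin 2) 1)).toMulEquiv (X 1 : MP) = X 0 := by
    simp [renameEquiv_apply, rename_X]
  rw [this]
  exact primeX0

lemma isUnit_eval_ne_zero {u : MP} (hu : IsUnit u) (v : Fin 2 → ℂ) : eval v u ≠ 0 := by
  obtain ⟨w, hw⟩ := isUnit_iff_exists_inv.mp hu
  have : eval v u * eval v w = 1 := by rw [← evalP, hw]; simp
  intro h; rw [h, zero_mul] at this; simpa using this

lemma not_assoc_X : ¬ Associated (X 0 : MP) (X 1) := by
  rintro ⟨u, hu⟩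
  have := congrArg (eval ![(1 : ℂ), 0]) hu
  simp [evalP] at this
  first
  | exact isUnit_eval_ne_zero u.isUnit ![(1 : ℂ), 0] this
  | exact isUnit_eval_ne_zero u.isUnit ![(1 : ℂ), 0] this.symm

lemma isUnit_gcd_sq : IsUnit (gcd ((X 0 : MP) ^ 2) ((X 1 : MP) ^ 2)) := by
  by_contra hng
  have h0 : gcd ((X 0 : MP) ^ 2) ((X 1 : MP) ^ 2) ≠ 0 := by
    intro h
    have := gcd_dvd_left ((X 0 : MP) ^ 2) ((X 1 : MP) ^ 2)
    rw [h] at this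
    exact pow_ne_zero 2 (MvPolynomial.X_ne_zero (R := ℂ) (0 : Fin 2)) (zero_dvd_iff.mp this)
  obtain ⟨p, hp, hpd⟩ := WfDvdMonoid.exists_irreducible_factor hng h0
  have hp' : Prime p := (UniqueFactorizationMonoid.irreducible_iff_prime).mp hp
  have h1 : p ∣ (X 0 : MP) := hp'.dvd_of_dvd_pow (hpd.trans (gcd_dvd_left _ _))
  have h2 : p ∣ (X 1 : MP) := hp'.dvd_of_dvd_pow (hpd.trans (gcd_dvd_right _ _))
  exact not_assoc_X (((hp.associated_of_dvd primeX0.irreducible h1).symm).trans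
    (hp.associated_of_dvd primeX1.irreducible h2))

lemma X0_not_dvd_X1_pow (β : ℕ) : ¬ (X 0 : MP) ∣ (X 1 : MP) ^ β := by
  rintro ⟨t, ht⟩
  have := congrArg (eval ![(0 : ℂ), 1]) ht
  simp [evalP] at this

lemma X1_not_dvd_X0_pow (α : ℕ) : ¬ (X 1 : MP) ∣ (X 0 : MP) ^ α := by
  rintro ⟨t, ht⟩
  have := congrArg (eval ![(1 : ℂ), 0]) ht
  simp [evalP] at this

lemma pow_dvd_iff_left (α β k : ℕ) : (X 0 : MP) ^ k ∣ X 0 ^ α * X 1 ^ β ↔ k ≤ α := by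
  constructor
  · intro h
    by_contra hk
    push_neg at hk
    have h1 : (X 0 : MP) ^ (α + 1) ∣ X 0 ^ α * X 1 ^ β :=
      dvd_trans (pow_dvd_pow _ (by omega)) h
    obtain ⟨t, ht⟩ := h1
    rw [pow_succ, mul_assoc] at ht
    have := mul_left_cancel₀ (pow_ne_zero α (MvPolynomial.X_ne_zero (R := ℂ) (0 : Fin 2))) ht
    exact X0_not_dvd_X1_pow β ⟨t, this⟩
  · intro h
    exact dvd_mul_of_dvd_left (pow_dvd_pow _ h) _

lemma pow_dvd_iff_right (α β k : ℕ) : (X 1 : MP) ^ k ∣ X 0 ^ α * X 1 ^ β ↔ k ≤ β := by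
  constructor
  · intro h
    by_contra hk
    push_neg at hk
    have h1 : (X 1 : MP) ^ (β + 1) ∣ X 1 ^ β * X 0 ^ α := by
      rw [mul_comm]
      exact dvd_trans (pow_dvd_pow _ (by omega)) h
    obtain ⟨t, ht⟩ := h1
    rw [pow_succ, mul_assoc] at ht
    have := mul_left_cancel₀ (pow_ne_zero β (MvPolynomial.X_ne_zero (R := ℂ) (1 : Fin 2))) ht
    exact X1_not_dvd_X0_pow α ⟨t, this⟩
  · intro h
    exact dvd_mul_of_dvd_right (pow_dvd_pow _ h) _

end

end S11

end Lemmas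
section Lemmas2

open MvPolynomial

namespace S11

noncomputable section

lemma rootMult_assoc {H H' : MP} (h : Associated H H') (z : P1) :
    rootMult H z = rootMult H' z := by
  unfold rootMult
  congr 1
  ext k
  exact ⟨fun hk => hk.trans h.dvd, fun hk => hk.trans h.symm.dvd⟩

lemma isUnit_C_ne {c : ℂ} (hc : c ≠ 0) : IsUnit (C c : MP) :=
  isUnit_iff_exists_inv.mpr ⟨C c⁻¹, by rw [← C_mul, mul_inv_cancel₀ hc, C_1]⟩

lemma rep_ne_both (z : P1) : z.rep 0 ≠ 0 ∨ z.rep 1 ≠ 0 := by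
  by_contra h
  push_neg at h
  apply z.rep_nonzero
  funext i
  fin_cases i
  · exact h.1
  · exact h.2

lemma rootMult_mon_left {z : P1} (hz : z.rep 0 = 0) (α β : ℕ) :
    rootMult (X 0 ^ α * X 1 ^ β : MP) z = α := by
  have hb : z.rep 1 ≠ 0 := (rep_ne_both z).resolve_left (by simpa using hz)
  have hL : linForm z = C (z.rep 1) * X 0 := by simp [linForm, hz]
  have hset : {k : ℕ | linForm z ^ k ∣ (X 0 ^ α * X 1 ^ β : MP)} = Set.Iic α := by
    ext k
    have hA : Associated ((linForm z) ^ k) ((X 0 : MP) ^ k) := by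
      rw [hL, mul_pow, ← C_pow]
      exact associated_unit_mul_left _ _ (isUnit_C_ne (pow_ne_zero k hb))
    simp only [Set.mem_setOf_eq, Set.mem_Iic]
    rw [hA.dvd_iff_dvd_left, pow_dvd_iff_left]
  rw [rootMult, hset, csSup_Iic]

lemma rootMult_mon_right {z : P1} (hz : z.rep 1 = 0) (α β : ℕ) :
    rootMult (X 0 ^ α * X 1 ^ β : MP) z = β := by
  have ha : z.rep 0 ≠ 0 := (rep_ne_both z).resolve_right (by simpa using hz)
  have hL : linForm z = C (-(z.rep 0)) * X 1 := by
    simp [linForm, hz]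
  have hset : {k : ℕ | linForm z ^ k ∣ (X 0 ^ α * X 1 ^ β : MP)} = Set.Iic β := by
    ext k
    have hA : Associated ((linForm z) ^ k) ((X 1 : MP) ^ k) := by
      rw [hL, mul_pow, ← C_pow]
      exact associated_unit_mul_left _ _ (isUnit_C_ne (pow_ne_zero k (neg_ne_zero.mpr ha)))
    simp only [Set.mem_setOf_eq, Set.mem_Iic]
    rw [hA.dvd_iff_dvd_left, pow_dvd_iff_right]
  rw [rootMult, hset, csSup_Iic]

lemma rootMult_mon_gen {z : P1} (hz0 : z.rep 0 ≠ 0) (hz1 : z.rep 1 ≠ 0) (α β : ℕ) :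
    rootMult (X 0 ^ α * X 1 ^ β : MP) z = 0 := by
  have hset : {k : ℕ | linForm z ^ k ∣ (X 0 ^ α * X 1 ^ β : MP)} = {0} := by
    ext k
    simp only [Set.mem_setOf_eq, Set.mem_singleton_iff]
    constructor
    · intro hk
      by_contra hk0
      have hdvd : linForm z ∣ (X 0 ^ α * X 1 ^ β : MP) :=
        (dvd_pow_self (linForm z) hk0).trans hk
      obtain ⟨t, ht⟩ := hdvd
      have hLe : eval z.rep (linForm z) = 0 := by simp [linForm]; ring
      have h2 : eval z.rep (X 0 ^ α * X 1 ^ β : MP) = 0 := by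
        rw [ht, evalP, hLe, zero_mul]
      simp only [evalP, map_pow, eval_X] at h2
      exact mul_ne_zero (pow_ne_zero α hz0) (pow_ne_zero β hz1) h2
    · rintro rfl
      simp
  rw [rootMult, hset, csSup_singleton]

lemma infty_rep : infty.rep 0 ≠ 0 ∧ infty.rep 1 = 0 := by
  have h : Projectivization.mk ℂ infty.rep infty.rep_nonzero
      = Projectivization.mk ℂ ![1, 0] (by intro h; simpa using congrFun h 0) :=
    Projectivization.mk_rep infty
  obtain ⟨a, ha⟩ := (Projectivization.mk_eq_mk_iff ℂ _ _ _ _).mp h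
  constructor
  · have := congrFun ha 0
    simp [Units.smul_def] at this
    rw [← this]
    exact a.ne_zero
  · have := congrFun ha 1
    simp [Units.smul_def] at this
    exact this.symm

lemma ptc0_rep : (ptc 0).rep 0 = 0 := by
  have h : Projectivization.mk ℂ (ptc 0).rep (ptc 0).rep_nonzero
      = Projectivization.mk ℂ ![0, 1] (by intro h; simpa using congrFun h 1) :=
    Projectivization.mk_rep (ptc 0)
  obtain ⟨a, ha⟩ := (Projectivization.mk_eq_mk_iff ℂ _ _ _ _).mp h
  have := congrFun ha 0
  simp [Units.smul_def] at this
  exact this.symm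

lemma ne_infty_of_rep0 {z : P1} (hz : z.rep 0 = 0) : infty ≠ z := by
  intro he
  apply infty_rep.1
  rw [he]
  exact hz

end

end S11

end Lemmas2
section Lemmas3

open MvPolynomial

namespace S11

noncomputable section

lemma fhat_spec₁ (f : MP × MP) : f.1 = Hgcd f * (fhat f).1 :=
  (dvd_def.mp (gcd_dvd_left f.1 f.2)).choose_spec

lemma fhat_spec₂ (f : MP × MP) : f.2 = Hgcd f * (fhat f).2 :=
  (dvd_def.mp (gcd_dvd_right f.1 f.2)).choose_spec

lemma apply₁_eq_infty (g : MP × MP) (z : P1) (h1 : eval z.rep g.1 ≠ 0)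
    (h2 : eval z.rep g.2 = 0) : apply₁ g z = infty := by
  have hne : (![eval z.rep g.1, eval z.rep g.2] : Fin 2 → ℂ) ≠ 0 := by
    intro h
    exact h1 (by simpa using congrFun h 0)
  rw [apply₁, dif_pos hne]
  have : Projectivization.mk ℂ (![eval z.rep g.1, eval z.rep g.2] : Fin 2 → ℂ) hne
      = Projectivization.mk ℂ ![1, 0] (by intro h; simpa using congrFun h 0) := by
    rw [Projectivization.mk_eq_mk_iff]
    refine ⟨Units.mk0 _ h1, ?_⟩
    funext i
    fin_cases i <;> simp [Units.smul_def, h2]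
  exact this

lemma fhatFun_pair_zero (P : MP) (hP : P ≠ 0) (z : P1) : fhatFun (P, 0) z = infty := by
  have hg : Hgcd (P, (0 : MP)) = normalize P := gcd_zero_right P
  have hgne : Hgcd (P, (0 : MP)) ≠ 0 := by
    rw [hg]
    exact fun h => hP (normalize_eq_zero.mp h)
  have h1 : P = Hgcd (P, (0 : MP)) * (fhat (P, (0 : MP))).1 := fhat_spec₁ (P, 0)
  have h2 : (0 : MP) = Hgcd (P, (0 : MP)) * (fhat (P, (0 : MP))).2 := fhat_spec₂ (P, 0)
  have hq2 : (fhat (P, (0 : MP))).2 = 0 := by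
    rcases mul_eq_zero.mp h2.symm with h | h
    · exact absurd h hgne
    · exact h
  have hunit : IsUnit (fhat (P, (0 : MP))).1 := by
    obtain ⟨u, hu⟩ := (normalize_associated P : Associated (normalize P) P)
    rw [hg] at h1
    have : normalize P * (u : MP) = normalize P * (fhat (P, (0 : MP))).1 := by
      rw [hu, ← h1]
    have heq := mul_left_cancel₀ (by rw [hg] at hgne; exact hgne) this
    rw [← heq]
    exact u.isUnit
  rw [fhatFun]
  exact apply₁_eq_infty _ z (isUnit_eval_ne_zero hunit _) (by rw [hq2]; simp)

lemma G_assoc (k : ℕ) :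
    Associated (Hgcd ((X 0 ^ (k + 2) * X 1 ^ (k + 1) : MP), (X 0 ^ k * X 1 ^ (k + 3) : MP)))
      ((X 0 : MP) ^ k * X 1 ^ (k + 1)) := by
  have e1 : (X 0 ^ (k + 2) * X 1 ^ (k + 1) : MP) = (X 0 ^ k * X 1 ^ (k + 1)) * X 0 ^ 2 := by
    ring
  have e2 : (X 0 ^ k * X 1 ^ (k + 3) : MP) = (X 0 ^ k * X 1 ^ (k + 1)) * X 1 ^ 2 := by
    ring
  have : Hgcd ((X 0 ^ (k + 2) * X 1 ^ (k + 1) : MP), (X 0 ^ k * X 1 ^ (k + 3) : MP))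
      = normalize ((X 0 : MP) ^ k * X 1 ^ (k + 1)) * gcd ((X 0 : MP) ^ 2) ((X 1 : MP) ^ 2) := by
    rw [Hgcd]
    simp only
    rw [e1, e2, gcd_eq_normalize (gcd_mul_left' _ _ _).dvd (gcd_mul_left' _ _ _).symm.dvd]
    exact (@normalize_mul MP _ UniqueFactorizationMonoid.strongNormalizationMonoid _ _).trans
      (congrArg (normalize ((X 0 : MP) ^ k * X 1 ^ (k + 1)) * ·) (normalize_gcd _ _))
  rw [this]
  exact (associated_mul_unit_left _ _ isUnit_gcd_sq).trans (normalize_associated _)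

lemma mon_ne_zero (α β : ℕ) : (X 0 ^ α * X 1 ^ β : MP) ≠ 0 :=
  mul_ne_zero (pow_ne_zero _ (MvPolynomial.X_ne_zero _)) (pow_ne_zero _ (MvPolynomial.X_ne_zero _))

lemma fhatFun_G_infty (k : ℕ) :
    fhatFun ((X 0 ^ (k + 2) * X 1 ^ (k + 1) : MP), (X 0 ^ k * X 1 ^ (k + 3) : MP)) infty
      = infty := by
  set f : MP × MP := ((X 0 ^ (k + 2) * X 1 ^ (k + 1) : MP), (X 0 ^ k * X 1 ^ (k + 3) : MP))
    with hf
  obtain ⟨u, hu⟩ := (G_assoc k).symm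
  -- hu : X0^k * X1^(k+1) * u = Hgcd f
  have hane : ((X 0 : MP) ^ k * X 1 ^ (k + 1)) ≠ 0 := mon_ne_zero _ _
  have h1 : f.1 = Hgcd f * (fhat f).1 := fhat_spec₁ f
  have h2 : f.2 = Hgcd f * (fhat f).2 := fhat_spec₂ f
  rw [← hu, mul_assoc] at h1 h2
  have e1 : f.1 = (X 0 ^ k * X 1 ^ (k + 1) : MP) * X 0 ^ 2 := by rw [hf]; ring
  have e2 : f.2 = (X 0 ^ k * X 1 ^ (k + 1) : MP) * X 1 ^ 2 := by rw [hf]; ring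
  have c1 : (X 0 : MP) ^ 2 = (u : MP) * (fhat f).1 :=
    mul_left_cancel₀ hane (by rw [← h1, e1])
  have c2 : (X 1 : MP) ^ 2 = (u : MP) * (fhat f).2 :=
    mul_left_cancel₀ hane (by rw [← h2, e2])
  have hv0 : infty.rep 0 ≠ 0 := infty_rep.1
  have hv1 : infty.rep 1 = 0 := infty_rep.2
  have hu0 : eval infty.rep (u : MP) ≠ 0 := isUnit_eval_ne_zero u.isUnit _
  have ev1 : eval infty.rep (fhat f).1 ≠ 0 := by
    intro h
    have := congrArg (eval infty.rep) c1
    rw [evalP, h, mul_zero] at this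
    simp only [map_pow, eval_X] at this
    exact pow_ne_zero 2 hv0 this
  have ev2 : eval infty.rep (fhat f).2 = 0 := by
    have := congrArg (eval infty.rep) c2
    rw [evalP] at this
    simp only [map_pow, eval_X, hv1] at this
    rcases mul_eq_zero.mp ((by simpa using this.symm) : eval infty.rep (u : MP) *
        eval infty.rep (fhat f).2 = 0) with h | h
    · exact absurd h hu0
    · exact h
  rw [fhatFun]
  exact apply₁_eq_infty _ _ ev1 ev2

end

end S11

end Lemmas3

/-- for odd `d = 2m+1 ≥ 3`, the maps
`F = [X^{m+1}Y^m : 0]` and `G = [X^{m+1}Y^m : X^{m-1}Y^{m+2}]` are semistable but not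
stable, and the conjugates `M_t ∘ G ∘ M_t^{-1}` (with `M_t = [tX : Y]`) are projectively
the pairs `(X^{m+1}Y^m, t·X^{m-1}Y^{m+2})`, which converge coefficientwise to `F`
as `t → 0`. -/
theorem statement11 (d m : ℕ) (hm : 1 ≤ m) (hd : d = 2 * m + 1) :
    Semistable d ((X 0 ^ (m + 1) * X 1 ^ m : MP), (0 : MP)) ∧
    ¬ Stable d ((X 0 ^ (m + 1) * X 1 ^ m : MP), (0 : MP)) ∧
    Semistable d ((X 0 ^ (m + 1) * X 1 ^ m : MP), (X 0 ^ (m - 1) * X 1 ^ (m + 2) : MP)) ∧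
    ¬ Stable d ((X 0 ^ (m + 1) * X 1 ^ m : MP), (X 0 ^ (m - 1) * X 1 ^ (m + 2) : MP)) ∧
    (∀ t : ℂ, t ≠ 0 →
      ProjEq ((X 0 ^ (m + 1) * X 1 ^ m : MP), (C t * (X 0 ^ (m - 1) * X 1 ^ (m + 2)) : MP))
        (comp2 ((C t * X 0 : MP), (X 1 : MP))
          (comp2 ((X 0 ^ (m + 1) * X 1 ^ m : MP), (X 0 ^ (m - 1) * X 1 ^ (m + 2) : MP))
            ((X 0 : MP), (C t * X 1 : MP))))) ∧
    (∀ μ : Fin 2 →₀ ℕ,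
      Tendsto (fun t : ℂ =>
          (coeff μ (X 0 ^ (m + 1) * X 1 ^ m : MP),
           coeff μ (C t * (X 0 ^ (m - 1) * X 1 ^ (m + 2)) : MP)))
        (𝓝[≠] (0 : ℂ))
        (𝓝 (coeff μ (X 0 ^ (m + 1) * X 1 ^ m : MP), coeff μ (0 : MP)))) := by
  classical
  obtain ⟨k, rfl⟩ : ∃ k, m = k + 1 := ⟨m - 1, by omega⟩
  subst hd
  simp only [Nat.add_sub_cancel, show k + 1 + 1 = k + 2 from rfl, show k + 1 + 2 = k + 3 from rfl]
  set F : MP × MP := ((X 0 ^ (k + 2) * X 1 ^ (k + 1) : MP), (0 : MP)) with hFdef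
  set G : MP × MP := ((X 0 ^ (k + 2) * X 1 ^ (k + 1) : MP), (X 0 ^ k * X 1 ^ (k + 3) : MP))
    with hGdef
  have hdq : ((2 * (k + 1) + 1 : ℕ) : ℚ) = 2 * (k : ℚ) + 3 := by push_cast; ring
  have hFassoc : Associated (Hgcd F) (X 0 ^ (k + 2) * X 1 ^ (k + 1) : MP) := by
    rw [Hgcd, hFdef]
    simp only
    rw [gcd_zero_right]
    exact normalize_associated _
  have depF : ∀ z : P1, depthP F z = rootMult (X 0 ^ (k + 2) * X 1 ^ (k + 1) : MP) z :=
    fun z => S11.rootMult_assoc hFassoc z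
  have depG : ∀ z : P1, depthP G z = rootMult (X 0 ^ k * X 1 ^ (k + 1) : MP) z :=
    fun z => S11.rootMult_assoc (S11.G_assoc k) z
  refine ⟨?_, ?_, ?_, ?_, ?_, ?_⟩
  · -- Semistable F
    constructor
    · intro z
      rw [depF z]
      rcases eq_or_ne (z.rep 0) 0 with h0 | h0
      · rw [S11.rootMult_mon_left h0]
        rw [hdq]; push_cast; linarith
      · rcases eq_or_ne (z.rep 1) 0 with h1 | h1
        · rw [S11.rootMult_mon_right h1]
          rw [hdq]; push_cast; linarith
        · rw [S11.rootMult_mon_gen h0 h1]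
          rw [hdq]; push_cast; linarith
    · intro h hdep
      rw [depF h] at hdep
      rcases eq_or_ne (h.rep 0) 0 with h0 | h0
      · rw [show fhatFun F h = infty from
          S11.fhatFun_pair_zero _ (S11.mon_ne_zero _ _) h]
        exact S11.ne_infty_of_rep0 h0
      · exfalso
        rcases eq_or_ne (h.rep 1) 0 with h1 | h1
        · rw [S11.rootMult_mon_right h1] at hdep
          rw [hdq] at hdep; push_cast at hdep; linarith
        · rw [S11.rootMult_mon_gen h0 h1] at hdep
          rw [hdq] at hdep; push_cast at hdep; linarith
  · -- ¬ Stable F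
    intro hS
    have h := hS.1 (ptc 0)
    rw [depF (ptc 0), S11.rootMult_mon_left S11.ptc0_rep] at h
    rw [hdq] at h; push_cast at h; linarith
  · -- Semistable G
    constructor
    · intro z
      rw [depG z]
      rcases eq_or_ne (z.rep 0) 0 with h0 | h0
      · rw [S11.rootMult_mon_left h0]
        rw [hdq]; push_cast; linarith
      · rcases eq_or_ne (z.rep 1) 0 with h1 | h1
        · rw [S11.rootMult_mon_right h1]
          rw [hdq]; push_cast; linarith
        · rw [S11.rootMult_mon_gen h0 h1]
          rw [hdq]; push_cast; linarith
    · intro h hdep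
      exfalso
      rw [depG h] at hdep
      rcases eq_or_ne (h.rep 0) 0 with h0 | h0
      · rw [S11.rootMult_mon_left h0] at hdep
        rw [hdq] at hdep; push_cast at hdep; linarith
      · rcases eq_or_ne (h.rep 1) 0 with h1 | h1
        · rw [S11.rootMult_mon_right h1] at hdep
          rw [hdq] at hdep; push_cast at hdep; linarith
        · rw [S11.rootMult_mon_gen h0 h1] at hdep
          rw [hdq] at hdep; push_cast at hdep; linarith
  · -- ¬ Stable G
    intro hS
    refine hS.2 infty ?_ (S11.fhatFun_G_infty k)
    rw [depG infty, S11.rootMult_mon_right S11.infty_rep.2]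
    rw [hdq]; push_cast; linarith
  · -- ProjEq
    intro t ht
    refine ⟨t ^ (k + 2), pow_ne_zero _ ht, ?_⟩
    simp only [comp2, map_mul, map_pow, aeval_X, Matrix.cons_val_zero, Matrix.cons_val_one,
      Matrix.head_cons, aeval_C, algebraMap_eq, C_pow, hGdef]
    rw [Prod.mk.injEq]
    exact ⟨by ring, by ring⟩
  · -- Tendsto
    intro μ
    simp only [coeff_C_mul, coeff_zero]
    have h1 : Tendsto (fun t : ℂ => t * coeff μ (X 0 ^ k * X 1 ^ (k + 3) : MP)) (𝓝 0)
        (𝓝 0) := by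
      simpa using (tendsto_id.mul tendsto_const_nhds :
        Tendsto (fun t : ℂ => t * coeff μ (X 0 ^ k * X 1 ^ (k + 3) : MP)) (𝓝 0)
          (𝓝 (0 * coeff μ (X 0 ^ k * X 1 ^ (k + 3) : MP))))
    exact ((tendsto_const_nhds.prodMk_nhds h1).mono_left nhdsWithin_le_nhds)
end
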